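/- Let F be a skew-symmetric endomorphism of a real vector space V with nondegenerate symmetric bilinear form g of signature (2,q) with q ≥ 2. Then F ∘ F = 0 if and only if either F = 0 or there exist vectors k, ℓ ∈ V, forming a basis of a 2-dimensional totally degenerate subspace (i.e., g(k,k) = g(k,ℓ) = g(ℓ,ℓ) = 0 and k,ℓ linearly independent), such that F(u) = g(ℓ,u)k − g(k,u)ℓ for all u ∈ V. -/

import Mathlib

open Module

section Helpers

variable {q : ℕ} {V : Type*} [AddCommGroup V] [Module ℝ V]

private lemma B_symm (B : V →ₗ[ℝ] V →ₗ[ℝ] ℝ) (b : Basis (Fin 2 ⊕ Fin q) ℝ V)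
    (hb : ∀ i j, B (b i) (b j) =
      if i = j then Sum.elim (fun _ => (-1 : ℝ)) (fun _ => (1 : ℝ)) i else 0) :
    ∀ x y : V, B x y = B y x := by
  have h : B = B.flip := by
    apply b.ext; intro i
    apply b.ext; intro j
    rw [LinearMap.flip_apply, hb, hb]
    rcases eq_or_ne i j with rfl | hij
    · simp
    · simp [hij, hij.symm]
  intro x y
  calc B x y = B.flip x y := by rw [← h]
    _ = B y x := rfl

private lemma B_expand (B : V →ₗ[ℝ] V →ₗ[ℝ] ℝ) (b : Basis (Fin 2 ⊕ Fin q) ℝ V)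
    (hb : ∀ i j, B (b i) (b j) =
      if i = j then Sum.elim (fun _ => (-1 : ℝ)) (fun _ => (1 : ℝ)) i else 0)
    (x : V) (j : Fin 2 ⊕ Fin q) :
    B x (b j) = b.repr x j * Sum.elim (fun _ => (-1 : ℝ)) (fun _ => (1 : ℝ)) j := by
  conv_lhs => rw [← b.sum_repr x]
  rw [map_sum, LinearMap.sum_apply]
  simp only [map_smul, LinearMap.smul_apply, smul_eq_mul, hb]
  rw [Finset.sum_eq_single j]
  · simp
  · intro i _ hij; simp [hij]
  · intro h; exact absurd (Finset.mem_univ j) h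

private lemma B_nondeg (B : V →ₗ[ℝ] V →ₗ[ℝ] ℝ) (b : Basis (Fin 2 ⊕ Fin q) ℝ V)
    (hb : ∀ i j, B (b i) (b j) =
      if i = j then Sum.elim (fun _ => (-1 : ℝ)) (fun _ => (1 : ℝ)) i else 0) :
    ∀ x : V, (∀ y : V, B x y = 0) → x = 0 := by
  intro x hx
  have hrepr : ∀ j, b.repr x j = 0 := by
    intro j
    have := hx (b j)
    rw [B_expand B b hb x j] at this
    rcases j with j | j <;> simpa using this
  have : b.repr x = 0 := by ext j; simp [hrepr j]
  simpa using b.repr.injective (by simpa using this)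

private lemma isotropic_finrank_le (B : V →ₗ[ℝ] V →ₗ[ℝ] ℝ) (b : Basis (Fin 2 ⊕ Fin q) ℝ V)
    (hb : ∀ i j, B (b i) (b j) =
      if i = j then Sum.elim (fun _ => (-1 : ℝ)) (fun _ => (1 : ℝ)) i else 0)
    (W : Submodule ℝ V) (hW : ∀ x ∈ W, ∀ y ∈ W, B x y = 0) :
    finrank ℝ W ≤ 2 := by
  have hfin : Module.Finite ℝ V := Module.Finite.of_basis b
  set π : V →ₗ[ℝ] (Fin 2 → ℝ) := LinearMap.pi (fun i : Fin 2 => B (b (Sum.inl i))) with hπ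
  have hinj : Function.Injective (π.comp W.subtype) := by
    rw [← LinearMap.ker_eq_bot, LinearMap.ker_eq_bot']
    rintro ⟨w, hw⟩ hmw
    have hcomp : ∀ i : Fin 2, B (b (Sum.inl i)) w = 0 := by
      intro i
      have := congrFun (congrArg (fun f => (f : Fin 2 → ℝ)) hmw) i
      simpa [π] using this
    have hinl : ∀ i : Fin 2, b.repr w (Sum.inl i) = 0 := by
      intro i
      have h1 := hcomp i
      rw [B_symm B b hb] at h1
      rw [B_expand B b hb w (Sum.inl i)] at h1
      simpa using h1
    have hww : B w w = 0 := hW w hw w hw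
    have hsum : ∑ j : Fin 2 ⊕ Fin q, b.repr w j * B w (b j) = 0 := by
      calc ∑ j : Fin 2 ⊕ Fin q, b.repr w j * B w (b j)
          = ∑ j : Fin 2 ⊕ Fin q, B w (b.repr w j • b j) := by
            simp [smul_eq_mul]
        _ = B w w := by rw [← map_sum, b.sum_repr]
        _ = 0 := hww
    have hsum2 : ∑ j : Fin q, (b.repr w (Sum.inr j))^2 = 0 := by
      have : ∀ j : Fin 2 ⊕ Fin q, b.repr w j * B w (b j) =
          Sum.elim (fun _ : Fin 2 => (0:ℝ)) (fun j => (b.repr w (Sum.inr j))^2) j := by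
        intro j
        rw [B_expand B b hb w j]
        rcases j with j | j
        · simp [hinl j]
        · simp [sq]
      rw [Finset.sum_congr rfl (fun j _ => this j), Fintype.sum_sum_type] at hsum
      simpa using hsum
    have hinr : ∀ j : Fin q, b.repr w (Sum.inr j) = 0 := by
      intro j
      have hnn : ∀ j ∈ Finset.univ (α := Fin q), (0:ℝ) ≤ (b.repr w (Sum.inr j))^2 :=
        fun j _ => sq_nonneg _
      have := (Finset.sum_eq_zero_iff_of_nonneg hnn).mp hsum2 j (Finset.mem_univ j)
      exact pow_eq_zero_iff (n := 2) (by norm_num) |>.mp this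
    have : b.repr w = 0 := by
      ext j; rcases j with j | j
      · simpa using hinl j
      · simpa using hinr j
    have hw0 : w = 0 := by simpa using b.repr.injective (by simpa using this)
    exact Subtype.ext hw0
  have := LinearMap.finrank_le_finrank_of_injective hinj
  simpa using this

end Helpers

/-- Lemma B.4 (ii): in signature (2,q), q ≥ 2, a skew-symmetric endomorphism F satisfies
F ∘ F = 0 if and only if F = 0 or F = k ⊗ ℓ♭ − ℓ ⊗ k♭ for a basis {k,ℓ} of a
two-dimensional totally degenerate subspace. -/
theorem skew_sq_zero_signature_two
    (q : ℕ) (hq : 2 ≤ q) (V : Type*) [AddCommGroup V] [Module ℝ V]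
    (B : V →ₗ[ℝ] V →ₗ[ℝ] ℝ)
    (b : Basis (Fin 2 ⊕ Fin q) ℝ V)
    (hb : ∀ i j, B (b i) (b j) =
      if i = j then Sum.elim (fun _ => (-1 : ℝ)) (fun _ => (1 : ℝ)) i else 0)
    (F : V →ₗ[ℝ] V)
    (hskew : ∀ u v : V, B (F u) v = - B u (F v)) :
    F ∘ₗ F = 0 ↔
      (F = 0 ∨ ∃ k l : V, LinearIndependent ℝ ![k, l] ∧
        B k k = 0 ∧ B k l = 0 ∧ B l l = 0 ∧
        ∀ u : V, F u = B l u • k - B k u • l) := by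
  have hsymm := B_symm B b hb
  have hnd := B_nondeg B b hb
  have hfin : Module.Finite ℝ V := Module.Finite.of_basis b
  constructor
  · intro hFF
    by_cases hF0 : F = 0
    · exact Or.inl hF0
    right
    have hFF' : ∀ u : V, F (F u) = 0 := by
      intro u
      have := LinearMap.ext_iff.mp hFF u
      simpa using this
    have hiso : ∀ u v : V, B (F u) (F v) = 0 := by
      intro u v
      rw [hskew, hFF' v]
      simp
    set W := LinearMap.range F with hW
    have hWiso : ∀ x ∈ W, ∀ y ∈ W, B x y = 0 := by
      rintro _ ⟨u, rfl⟩ _ ⟨v, rfl⟩; exact hiso u v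
    have hrank : finrank ℝ W ≤ 2 := isotropic_finrank_le B b hb W hWiso
    have hsk2 : ∀ u v : V, B (F u) v + B (F v) u = 0 := by
      intro u v
      rw [hskew u v, hsymm u (F v)]
      ring
    -- dual vector extraction
    have hdual : ∀ k l : V, LinearIndependent ℝ ![k, l] → ∃ x, B k x = 1 ∧ B l x = 0 := by
      intro k l hkl
      have hpair := LinearIndependent.pair_iff.mp hkl
      have hlne : l ≠ 0 := by
        intro h
        have := hpair 0 1 (by simp [h])
        exact one_ne_zero this.2
      obtain ⟨y0, hy0⟩ : ∃ y0, B l y0 ≠ 0 := by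
        by_contra h
        push_neg at h
        exact hlne (hnd l h)
      have hx0 : ∃ x0, B l x0 = 0 ∧ B k x0 ≠ 0 := by
        by_contra h
        push_neg at h
        set c : ℝ := B k y0 / B l y0 with hc
        have hkey : ∀ u, B k u = c * B l u := by
          intro u
          have hlu : B l (u - (B l u / B l y0) • y0) = 0 := by
            simp [map_sub, map_smul, smul_eq_mul]
            field_simp
            ring
          have hku := h _ hlu
          have : B k u - (B l u / B l y0) * B k y0 = 0 := by
            simpa [map_sub, map_smul, smul_eq_mul] using hku
          rw [hc]
          field_simp at this ⊢
          linarith [this]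
        have hzero : ∀ u, B (k - c • l) u = 0 := by
          intro u
          simp [map_sub, LinearMap.sub_apply, map_smul, smul_eq_mul, hkey u]
        have hkc : k - c • l = 0 := hnd _ (by
          intro y
          simpa [LinearMap.sub_apply, LinearMap.smul_apply, smul_eq_mul, map_sub] using hzero y)
        have h1 : (1:ℝ) • k + (-c) • l = k - c • l := by module
        have := hpair 1 (-c) (h1.trans hkc)
        exact one_ne_zero this.1
      obtain ⟨x0, hlx0, hkx0⟩ := hx0
      refine ⟨(B k x0)⁻¹ • x0, ?_, ?_⟩
      · simp [map_smul, smul_eq_mul]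
        field_simp
      · simp [map_smul, smul_eq_mul, hlx0]
    -- rank cannot be ≤ 1
    have hrank1 : ¬ (finrank ℝ W ≤ 1) := by
      intro hle
      apply hF0
      obtain ⟨u0, hu0⟩ : ∃ u0, F u0 ≠ 0 := by
        by_contra h
        push_neg at h
        exact hF0 (LinearMap.ext fun u => by simp [h u])
      set k : V := F u0 with hk
      have hkW : k ∈ W := ⟨u0, rfl⟩
      have hspan : Submodule.span ℝ {k} = W := by
        apply Submodule.eq_of_le_of_finrank_le
        · rw [Submodule.span_le, Set.singleton_subset_iff]; exact hkW
        · rw [finrank_span_singleton hu0]; exact hle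
      have hrep : ∀ u : V, ∃ c : ℝ, F u = c • k := by
        intro u
        have : F u ∈ Submodule.span ℝ {k} := hspan ▸ (⟨u, rfl⟩ : F u ∈ W)
        obtain ⟨c, hc⟩ := Submodule.mem_span_singleton.mp this
        exact ⟨c, hc.symm⟩
      obtain ⟨v1, hv1⟩ : ∃ v1, B k v1 ≠ 0 := by
        by_contra h
        push_neg at h
        exact hu0 (hnd k h)
      obtain ⟨c1, hc1⟩ := hrep v1
      have hc1z : c1 = 0 := by
        have := hsk2 v1 v1
        rw [hc1] at this
        simp [map_smul, smul_eq_mul] at this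
        rcases this with h | h
        · exact h
        · exact absurd h hv1
      have hFv1 : F v1 = 0 := by rw [hc1, hc1z, zero_smul]
      apply LinearMap.ext
      intro u
      obtain ⟨c, hc⟩ := hrep u
      have := hsk2 u v1
      rw [hc, hFv1] at this
      simp [map_smul, smul_eq_mul] at this
      rcases this with h | h
      · rw [hc, h, zero_smul]; rfl
      · exact absurd h hv1
    have hrank2 : finrank ℝ W = 2 := by omega
    -- basis of W
    obtain ⟨bw⟩ : Nonempty (Basis (Fin 2) ℝ W) := ⟨finBasisOfFinrankEq ℝ W hrank2⟩
    set k : V := (bw 0 : V) with hkdef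
    set l : V := (bw 1 : V) with hldef
    have hkW : k ∈ W := (bw 0).2
    have hlW : l ∈ W := (bw 1).2
    have hindV : LinearIndependent ℝ ![k, l] := by
      have h1 := bw.linearIndependent.map' W.subtype (Submodule.ker_subtype W)
      have h2 : (W.subtype ∘ bw) = ![k, l] := by
        funext i
        fin_cases i <;> rfl
      rwa [h2] at h1
    have hpair := LinearIndependent.pair_iff.mp hindV
    have hrep : ∀ u : V, ∃ c d : ℝ, F u = c • k + d • l := by
      intro u
      have hmem : F u ∈ W := ⟨u, rfl⟩
      refine ⟨bw.repr ⟨F u, hmem⟩ 0, bw.repr ⟨F u, hmem⟩ 1, ?_⟩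
      have hcoe : (((∑ i, bw.repr ⟨F u, hmem⟩ i • bw i) : W) : V) = F u := by
        rw [bw.sum_repr]
      conv_lhs => rw [← hcoe]
      simp only [Fin.sum_univ_two, Submodule.coe_add, Submodule.coe_smul, hkdef, hldef]
    obtain ⟨x, hkx, hlx⟩ := hdual k l hindV
    have hindV' : LinearIndependent ℝ ![l, k] := by
      rw [LinearIndependent.pair_iff]
      intro s t hst
      have := hpair t s (by rw [← hst]; module)
      exact ⟨this.2, this.1⟩
    obtain ⟨y, hly, hky⟩ := hdual l k hindV'
    -- compute F x
    obtain ⟨cx, dx, hx⟩ := hrep x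
    have hcx : cx = 0 := by
      have := hsk2 x x
      rw [hx] at this
      simp only [map_add, map_smul, LinearMap.add_apply, LinearMap.smul_apply,
        smul_eq_mul, hkx, hlx] at this
      linarith
    have hFx : F x = dx • l := by rw [hx, hcx, zero_smul, zero_add]
    obtain ⟨cy, dy, hy⟩ := hrep y
    have hdy : dy = 0 := by
      have := hsk2 y y
      rw [hy] at this
      simp only [map_add, map_smul, LinearMap.add_apply, LinearMap.smul_apply,
        smul_eq_mul, hly, hky] at this
      linarith
    have hFy : F y = cy • k := by rw [hy, hdy, zero_smul, add_zero]
    have hcy : cy = -dx := by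
      have := hsk2 x y
      rw [hFx, hFy] at this
      simp only [map_smul, LinearMap.smul_apply, smul_eq_mul, hly, hkx] at this
      linarith
    -- general formula
    have hform : ∀ u : V, F u = (dx * B k u) • l - (dx * B l u) • k := by
      intro u
      obtain ⟨c, d, hu⟩ := hrep u
      have h1 := hsk2 u x
      rw [hu, hFx] at h1
      simp only [map_add, map_smul, LinearMap.add_apply, LinearMap.smul_apply,
        smul_eq_mul, hkx, hlx] at h1
      -- c * 1 + d * 0 + dx * B l u = 0
      have hc : c = -(dx * B l u) := by linarith
      have h2 := hsk2 u y
      rw [hu, hFy] at h2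
      simp only [map_add, map_smul, LinearMap.add_apply, LinearMap.smul_apply,
        smul_eq_mul, hky, hly] at h2
      -- c * 0 + d * 1 + cy * B k u = 0
      have hd : d = dx * B k u := by rw [hcy] at h2; linarith
      rw [hu, hc, hd]
      module
    have hdx : dx ≠ 0 := by
      intro h
      apply hF0
      apply LinearMap.ext
      intro u
      rw [hform u, h]
      simp
    -- witnesses
    refine ⟨dx • l, k, ?_, ?_, ?_, ?_, ?_⟩
    · rw [LinearIndependent.pair_iff]
      intro s t hst
      have : (t : ℝ) • k + (s * dx) • l = 0 := by
        rw [← hst]; module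
      have := hpair t (s * dx) this
      refine ⟨?_, this.1⟩
      rcases mul_eq_zero.mp this.2 with h | h
      · exact h
      · exact absurd h hdx
    · simp only [map_smul, LinearMap.smul_apply, smul_eq_mul]
      rw [hWiso l hlW l hlW]; ring
    · simp only [map_smul, LinearMap.smul_apply, smul_eq_mul]
      rw [hWiso l hlW k hkW]; ring
    · exact hWiso k hkW k hkW
    · intro u
      rw [hform u]
      simp only [map_smul, LinearMap.smul_apply, smul_eq_mul]
      module
  · rintro (rfl | ⟨k, l, hind, hkk, hkl, hll, hform⟩)
    · simp
    · have hlk : B l k = 0 := by rw [hsymm l k]; exact hkl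
      apply LinearMap.ext
      intro u
      simp only [LinearMap.comp_apply, LinearMap.zero_apply]
      rw [hform (F u), hform u]
      simp [map_sub, map_smul, smul_eq_mul, hkk, hkl, hll, hlk, LinearMap.sub_apply]
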